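/- Let Γ be a finite simple graph of weak type II, and let v₁, v₂ be vertices with d(v₁,v₂) ≥ 2. Let C be the vertex set of a connected component of the induced subgraph on the complement of St(v₁) such that v₂ ∉ C. Then C ∪ {v₁} is contained in a single connected component of the induced subgraph on the complement of St(v₂). In particular, C ∩ St(v₂) = ∅. -/

import Mathlib

open SimpleGraph

variable {V : Type*}

/-- The closed star of a vertex: the vertex together with its neighbors. -/
def gstar (G : SimpleGraph V) (v : V) : Set V := insert v (G.neighborSet v)

/-- `a` and `b` lie in the same connected component of the subgraph induced on `s`. -/
def SameComp (G : SimpleGraph V) (s : Set V) (a b : V) : Prop :=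
  ∃ (ha : a ∈ s) (hb : b ∈ s), (G.induce s).Reachable ⟨a, ha⟩ ⟨b, hb⟩

/-- `a` and `b` lie in different connected components of the subgraph induced on `s`. -/
def DiffComp (G : SimpleGraph V) (s : Set V) (a b : V) : Prop :=
  a ∈ s ∧ b ∈ s ∧ ¬ SameComp G s a b

/-- `Γ` is of weak type II. -/
def WeakTypeII (G : SimpleGraph V) : Prop :=
  G.Connected ∧ ∀ v w : V, G.dist v w = 2 →
    (G.induce ((G.neighborSet v ∩ G.neighborSet w)ᶜ)).Connected

/-- `Γ` is of type II. -/
def TypeII (G : SimpleGraph V) : Prop :=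
  G.Connected ∧ ∀ v w : V, v ≠ w →
    (G.induce ((G.neighborSet v ∩ G.neighborSet w)ᶜ)).Connected

section Aux

variable {G : SimpleGraph V} {s t : Set V} {a b c : V}

lemma sc_refl (ha : a ∈ s) : SameComp G s a a := ⟨ha, ha, Reachable.refl _⟩

lemma sc_symm (h : SameComp G s a b) : SameComp G s b a := by
  obtain ⟨ha, hb, r⟩ := h; exact ⟨hb, ha, r.symm⟩

lemma sc_trans (h : SameComp G s a b) (h' : SameComp G s b c) : SameComp G s a c := by
  obtain ⟨ha, hb, r⟩ := h; obtain ⟨hb', hc, r'⟩ := h'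
  exact ⟨ha, hc, r.trans r'⟩

lemma sc_adj (hab : G.Adj a b) (ha : a ∈ s) (hb : b ∈ s) : SameComp G s a b :=
  ⟨ha, hb, Adj.reachable (by simpa using hab)⟩

lemma walk_support_reachable {H : SimpleGraph V} :
    ∀ {u v : V} (W : H.Walk u v) (w : V), w ∈ W.support → H.Reachable u w := by
  intro u v W
  induction W with
  | nil => intro w hw; simp at hw; subst hw; exact Reachable.refl _
  | cons h W ih =>
    intro w hw
    rcases List.mem_cons.mp (by simpa using hw) with h1 | h2
    · subst h1; exact Reachable.refl _
    · exact (Adj.reachable h).trans (ih w h2)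

lemma sc_of_walk :
    ∀ (u v : s) (W : (G.induce s).Walk u v), (∀ w ∈ W.support, (w : V) ∈ t) →
      SameComp G t (u : V) (v : V) := by
  intro u v W
  induction W with
  | nil => intro ht; exact sc_refl (ht _ (by simp))
  | @cons u x v h W ih =>
    intro ht
    have h1 : SameComp G t (u : V) (x : V) :=
      sc_adj (by simpa using h) (ht u (by simp))
        (ht x (by simp [Walk.support_cons, Walk.start_mem_support]))
    exact sc_trans h1 (ih fun w hw => ht w (by simp [Walk.support_cons]; right; exact hw))

lemma first_hit {v₁ v₂ : V} (hnadj : ¬ G.Adj v₁ v₂) :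
    ∀ {z t : V} (W : G.Walk z t), t ∈ gstar G v₁ → z ∉ gstar G v₁ →
      (∀ u ∈ W.support, u ∉ G.neighborSet v₁ ∩ G.neighborSet v₂) →
      ∃ z' w, SameComp G (gstar G v₁)ᶜ z z' ∧ G.Adj z' w ∧ G.Adj v₁ w ∧ w ∉ gstar G v₂ := by
  intro z t W
  induction W with
  | nil => intro ht hz _; exact absurd ht hz
  | @cons z y _ hadj W ih =>
    intro ht hz hsupp
    by_cases hy : y ∈ gstar G v₁
    · rcases hy with h1 | h2
      · subst h1; exact absurd (Set.mem_insert_of_mem _ hadj.symm) hz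
      · have hyv₂ : y ∉ G.neighborSet v₂ := fun hc =>
          hsupp y (by simp [Walk.support_cons]) ⟨h2, hc⟩
        have hyne : y ≠ v₂ := by rintro rfl; exact hnadj h2
        refine ⟨z, y, sc_refl hz, hadj, h2, ?_⟩
        rintro (rfl | hc)
        · exact hyne rfl
        · exact hyv₂ hc
    · obtain ⟨z', w, hsc, h1, h2, h3⟩ :=
        ih ht hy (fun u hu => hsupp u (by simp [Walk.support_cons]; right; simpa using hu))
      exact ⟨z', w, sc_trans (sc_adj hadj hz hy) hsc, h1, h2, h3⟩

end Aux

/-- Γ of weak type II, `d(v₁,v₂) ≥ 2`, and `C` the vertex set of a connected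
component of the complement of `St(v₁)` with `v₂ ∉ C`.  Then `C ∪ {v₁}` lies in a single
connected component of the complement of `St(v₂)`; in particular `C ∩ St(v₂) = ∅`. -/
theorem stmt_3 [Fintype V] (G : SimpleGraph V) (h : WeakTypeII G)
    (v₁ v₂ : V) (hd : 2 ≤ G.dist v₁ v₂)
    (C : Set V) (hC : ∃ a ∈ C, C = {b | SameComp G (gstar G v₁)ᶜ a b})
    (hv₂ : v₂ ∉ C) :
    (∀ x ∈ C, SameComp G (gstar G v₂)ᶜ v₁ x) ∧ C ∩ gstar G v₂ = ∅ := by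
  classical
  obtain ⟨a, haC, hCdef⟩ := hC
  have hne : v₁ ≠ v₂ := by
    rintro rfl; simp [SimpleGraph.dist_self] at hd
  have hnadj : ¬ G.Adj v₁ v₂ := by
    intro had
    have : G.dist v₁ v₂ ≤ 1 := by
      simpa using SimpleGraph.dist_le (Walk.cons had Walk.nil)
    omega
  have hv₁s₂ : v₁ ∈ (gstar G v₂)ᶜ := by
    intro hc
    rcases hc with h1 | h2
    · exact hne h1
    · exact hnadj (h2 : G.Adj v₂ v₁).symm
  have hv₂s₁ : v₂ ∈ (gstar G v₁)ᶜ := by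
    intro hc
    rcases hc with h1 | h2
    · exact hne h1.symm
    · exact hnadj h2
  -- membership of C in (gstar v₁)ᶜ
  have hCmem : ∀ x ∈ C, x ∈ (gstar G v₁)ᶜ := by
    intro x hx
    rw [hCdef] at hx
    obtain ⟨_, hb, _⟩ := hx
    exact hb
  -- C is closed under SameComp in (gstar v₁)ᶜ
  have hCclosed : ∀ x ∈ C, ∀ y, SameComp G (gstar G v₁)ᶜ x y → y ∈ C := by
    intro x hx y hxy
    rw [hCdef] at hx ⊢
    exact sc_trans hx hxy
  -- C ∩ gstar v₂ = ∅
  have hdisj : C ∩ gstar G v₂ = ∅ := by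
    ext x
    simp only [Set.mem_inter_iff, Set.mem_empty_iff_false, iff_false, not_and]
    intro hxC hxS
    rcases hxS with h1 | h2
    · exact hv₂ (h1 ▸ hxC)
    · -- x adjacent to v₂, both outside gstar v₁ : v₂ ∈ C, contradiction
      exact hv₂ (hCclosed x hxC v₂ (sc_adj (h2 : G.Adj v₂ x).symm (hCmem x hxC) hv₂s₁))
  have hCsub₂ : ∀ x ∈ C, x ∈ (gstar G v₂)ᶜ := by
    intro x hx hc
    have : x ∈ C ∩ gstar G v₂ := ⟨hx, hc⟩
    rw [hdisj] at this; exact this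
  -- the auxiliary graph on the complement of the common link is connected
  have hΓ' : (G.induce ((G.neighborSet v₁ ∩ G.neighborSet v₂)ᶜ)).Connected := by
    by_cases hd2 : G.dist v₁ v₂ = 2
    · exact h.2 v₁ v₂ hd2
    · have hempty : G.neighborSet v₁ ∩ G.neighborSet v₂ = ∅ := by
        ext u
        simp only [Set.mem_inter_iff, Set.mem_empty_iff_false, iff_false, not_and]
        intro h1 h2
        have : G.dist v₁ v₂ ≤ 2 := by
          exact SimpleGraph.dist_le (Walk.cons (h1 : G.Adj v₁ u) (Walk.cons (h2 : G.Adj v₂ u).symm Walk.nil))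
        omega
      rw [hempty, Set.compl_empty]
      exact (induceUnivIso G).connected_iff.mpr h.1
  refine ⟨?_, hdisj⟩
  intro x hx
  have hx₁ : x ∈ (gstar G v₁)ᶜ := hCmem x hx
  have hx₂ : x ∈ (gstar G v₂)ᶜ := hCsub₂ x hx
  have hxm : x ∈ (G.neighborSet v₁ ∩ G.neighborSet v₂)ᶜ := by
    intro hc
    exact hx₁ (Set.mem_insert_of_mem _ hc.1)
  have hv₁m : v₁ ∈ (G.neighborSet v₁ ∩ G.neighborSet v₂)ᶜ := by
    intro hc
    exact G.irrefl (hc.1 : G.Adj v₁ v₁)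
  -- a walk in Γ' from x to v₁
  obtain ⟨W'⟩ := hΓ'.preconnected ⟨x, hxm⟩ ⟨v₁, hv₁m⟩
  -- project it down to G
  let W : G.Walk x v₁ := W'.map (SimpleGraph.Embedding.induce _).toHom
  have hWsupp : ∀ u ∈ W.support, u ∉ G.neighborSet v₁ ∩ G.neighborSet v₂ := by
    intro u hu
    replace hu : u ∈ W'.support.map (SimpleGraph.Embedding.induce (G := G) _).toHom := by
      rw [← SimpleGraph.Walk.support_map]; exact hu
    obtain ⟨u', _, rfl⟩ := List.mem_map.mp hu
    exact u'.2
  obtain ⟨z', w, hsc, hz'w, hv₁w, hwS₂⟩ :=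
    first_hit hnadj W (Set.mem_insert _ _) hx₁ hWsupp
  -- z' ∈ C
  have hz'C : z' ∈ C := hCclosed x hx z' hsc
  have hz'₂ : z' ∈ (gstar G v₂)ᶜ := hCsub₂ z' hz'C
  -- transfer the walk x → z' in (gstar v₁)ᶜ into (gstar v₂)ᶜ
  obtain ⟨hx₁', hz₁', r⟩ := hsc
  obtain ⟨Wxz⟩ := r
  have hWxz : ∀ u ∈ Wxz.support, (u : V) ∈ (gstar G v₂)ᶜ := by
    intro u hu
    have hr : (G.induce (gstar G v₁)ᶜ).Reachable ⟨x, hx₁'⟩ u :=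
      walk_support_reachable Wxz u hu
    have : SameComp G (gstar G v₁)ᶜ x (u : V) := ⟨hx₁', u.2, hr⟩
    exact hCsub₂ _ (hCclosed x hx _ this)
  have hscxz : SameComp G (gstar G v₂)ᶜ x z' := sc_of_walk _ _ Wxz hWxz
  exact sc_trans (sc_trans (sc_adj hv₁w hv₁s₂ hwS₂) (sc_adj hz'w.symm hwS₂ hz'₂))
    (sc_symm hscxz)
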